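/- Define p(t) = ∫₀^π (sin²ψ − 2cos²ψ)(sin²ψ + 4 sin⁴ψ)(sin²ψ + t cos²ψ)^{-3/2} sin ψ dψ for t ≥ 0. Then p(t) > 0 for every t > 0. -/

import Mathlib

open MeasureTheory Real

noncomputable section

/-- The function
`p(t) = ∫₀^π (sin²ψ − 2cos²ψ)(sin²ψ + 4sin⁴ψ)(sin²ψ + t cos²ψ)^{-3/2} sin ψ dψ`. -/
def pfun (t : ℝ) : ℝ :=
  ∫ ψ in (0:ℝ)..Real.pi,
    (Real.sin ψ ^ 2 - 2 * Real.cos ψ ^ 2) * (Real.sin ψ ^ 2 + 4 * Real.sin ψ ^ 4) *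
      ((Real.sin ψ ^ 2 + t * Real.cos ψ ^ 2) ^ ((3:ℝ)/2))⁻¹ * Real.sin ψ

namespace PfunAux

/-- the base `sin²ψ + t cos²ψ`. -/
def rr (t ψ : ℝ) : ℝ := Real.sin ψ ^ 2 + t * Real.cos ψ ^ 2

/-- the integrand of `pfun`. -/
def Fi (t ψ : ℝ) : ℝ :=
  (Real.sin ψ ^ 2 - 2 * Real.cos ψ ^ 2) * (Real.sin ψ ^ 2 + 4 * Real.sin ψ ^ 4) *
    ((rr t ψ) ^ ((3:ℝ)/2))⁻¹ * Real.sin ψ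

/-- the `t`-derivative of the integrand. -/
def Gi (t ψ : ℝ) : ℝ :=
  -((3/2) * ((Real.sin ψ ^ 2 - 2 * Real.cos ψ ^ 2) * (Real.sin ψ ^ 2 + 4 * Real.sin ψ ^ 4)) *
    Real.cos ψ ^ 2 * ((rr t ψ) ^ ((5:ℝ)/2))⁻¹ * Real.sin ψ)

/-- the nonnegative combination `(2+t)·Gi + (3/2)·Fi`. -/
def Hi (t ψ : ℝ) : ℝ :=
  (3/2) * (Real.sin ψ ^ 2 - 2 * Real.cos ψ ^ 2) ^ 2 * (Real.sin ψ ^ 2 + 4 * Real.sin ψ ^ 4) *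
    ((rr t ψ) ^ ((5:ℝ)/2))⁻¹ * Real.sin ψ

lemma pfun_eq (t : ℝ) : pfun t = ∫ ψ in (0:ℝ)..Real.pi, Fi t ψ := rfl

lemma rr_pos {t : ℝ} (ht : 0 < t) (ψ : ℝ) : 0 < rr t ψ := by
  have h := Real.sin_sq_add_cos_sq ψ
  have h1 : 0 ≤ Real.sin ψ ^ 2 := sq_nonneg _
  have h2 : 0 ≤ Real.cos ψ ^ 2 := sq_nonneg _
  unfold rr
  rcases eq_or_lt_of_le h2 with h3 | h3
  · nlinarith
  · nlinarith [mul_pos ht h3]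

lemma rr_ge_min {t : ℝ} (ht : 0 < t) (ψ : ℝ) : min 1 t ≤ rr t ψ := by
  have h := Real.sin_sq_add_cos_sq ψ
  have h1 : 0 ≤ Real.sin ψ ^ 2 := sq_nonneg _
  have h2 : 0 ≤ Real.cos ψ ^ 2 := sq_nonneg _
  have hm1 : min 1 t ≤ 1 := min_le_left _ _
  have hm2 : min 1 t ≤ t := min_le_right _ _
  unfold rr
  nlinarith [mul_le_mul_of_nonneg_right hm2 h2, mul_le_mul_of_nonneg_right hm1 h1]

lemma continuous_rr (t : ℝ) : Continuous (rr t) := by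
  unfold rr; fun_prop

lemma continuous_rpow_inv {t : ℝ} (ht : 0 < t) (e : ℝ) :
    Continuous (fun ψ => ((rr t ψ) ^ e)⁻¹) := by
  apply Continuous.inv₀
  · exact (continuous_rr t).rpow_const (fun ψ => Or.inl (rr_pos ht ψ).ne')
  · exact fun ψ => (Real.rpow_pos_of_pos (rr_pos ht ψ) e).ne'

lemma continuous_Fi {t : ℝ} (ht : 0 < t) : Continuous (Fi t) := by
  unfold Fi
  exact (((Real.continuous_sin.pow 2).sub (continuous_const.mul (Real.continuous_cos.pow 2))).mul
    ((Real.continuous_sin.pow 2).add (continuous_const.mul (Real.continuous_sin.pow 4)))).mul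
    (continuous_rpow_inv ht _) |>.mul Real.continuous_sin

lemma continuous_Gi {t : ℝ} (ht : 0 < t) : Continuous (Gi t) := by
  unfold Gi
  apply Continuous.neg
  exact ((continuous_const.mul (((Real.continuous_sin.pow 2).sub
    (continuous_const.mul (Real.continuous_cos.pow 2))).mul
    ((Real.continuous_sin.pow 2).add (continuous_const.mul (Real.continuous_sin.pow 4))))).mul
    (Real.continuous_cos.pow 2)).mul (continuous_rpow_inv ht _) |>.mul Real.continuous_sin

lemma continuous_Hi {t : ℝ} (ht : 0 < t) : Continuous (Hi t) := by
  unfold Hi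
  exact ((continuous_const.mul (((Real.continuous_sin.pow 2).sub
    (continuous_const.mul (Real.continuous_cos.pow 2))).pow 2)).mul
    ((Real.continuous_sin.pow 2).add (continuous_const.mul (Real.continuous_sin.pow 4)))).mul
    (continuous_rpow_inv ht _) |>.mul Real.continuous_sin

lemma measurable_Fi (t : ℝ) : Measurable (Fi t) := by
  have h32 : Continuous (fun y : ℝ => y ^ ((3:ℝ)/2)) :=
    Real.continuous_rpow_const (by norm_num)
  have h1 : Measurable (fun ψ => ((rr t ψ) ^ ((3:ℝ)/2))⁻¹) :=
    ((h32.comp (continuous_rr t)).measurable).inv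
  unfold Fi
  exact (((((Real.continuous_sin.pow 2).sub
    (continuous_const.mul (Real.continuous_cos.pow 2))).mul
    ((Real.continuous_sin.pow 2).add
      (continuous_const.mul (Real.continuous_sin.pow 4)))).measurable).mul h1).mul
    Real.continuous_sin.measurable

/-- rewriting `rr^{3/2}` and `rr^{5/2}` via `A = rr^{1/2}`. -/
lemma rpow_three_halves {R : ℝ} (hR : 0 < R) : R ^ ((3:ℝ)/2) = R * R ^ ((1:ℝ)/2) := by
  rw [show (3:ℝ)/2 = 1 + 1/2 by norm_num, Real.rpow_add hR, Real.rpow_one]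

lemma rpow_five_halves {R : ℝ} (hR : 0 < R) : R ^ ((5:ℝ)/2) = R ^ 2 * R ^ ((1:ℝ)/2) := by
  rw [show (5:ℝ)/2 = ((2:ℕ):ℝ) + 1/2 by norm_num, Real.rpow_add hR, Real.rpow_natCast]

lemma hasDerivAt_Fi {t : ℝ} (ht : 0 < t) (ψ : ℝ) :
    HasDerivAt (fun s => Fi s ψ) (Gi t ψ) t := by
  have hR : 0 < rr t ψ := rr_pos ht ψ
  have h1 : HasDerivAt (fun s => rr s ψ) (Real.cos ψ ^ 2) t := by
    unfold rr; exact (hasDerivAt_mul_const (Real.cos ψ ^ 2)).const_add (Real.sin ψ ^ 2)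
  have h2 : HasDerivAt (fun y : ℝ => y ^ ((3:ℝ)/2))
      ((3:ℝ)/2 * (rr t ψ) ^ ((3:ℝ)/2 - 1)) (rr t ψ) :=
    Real.hasDerivAt_rpow_const (Or.inl hR.ne')
  have h3 : HasDerivAt (fun s => (rr s ψ) ^ ((3:ℝ)/2))
      ((3:ℝ)/2 * (rr t ψ) ^ ((3:ℝ)/2 - 1) * Real.cos ψ ^ 2) t := by
    have := h2.comp t h1; exact this
  have hne : (rr t ψ) ^ ((3:ℝ)/2) ≠ 0 := (Real.rpow_pos_of_pos hR _).ne'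
  have h4 := h3.inv hne
  have h5 := (h4.const_mul ((Real.sin ψ ^ 2 - 2 * Real.cos ψ ^ 2) *
      (Real.sin ψ ^ 2 + 4 * Real.sin ψ ^ 4))).mul_const (Real.sin ψ)
  refine h5.congr_deriv ?_
  have e1 : (rr t ψ) ^ ((3:ℝ)/2 - 1) = (rr t ψ) ^ ((1:ℝ)/2) := by norm_num
  have e3 := rpow_three_halves hR
  have e5 := rpow_five_halves hR
  have hA : 0 < (rr t ψ) ^ ((1:ℝ)/2) := Real.rpow_pos_of_pos hR _
  unfold Gi
  rw [e1, e3, e5]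
  field_simp

lemma key_identity {t : ℝ} (ht : 0 < t) (ψ : ℝ) :
    (2 + t) * Gi t ψ + (3/2) * Fi t ψ = Hi t ψ := by
  have hR : 0 < rr t ψ := rr_pos ht ψ
  have e3 := rpow_three_halves hR
  have e5 := rpow_five_halves hR
  have hA : 0 < (rr t ψ) ^ ((1:ℝ)/2) := Real.rpow_pos_of_pos hR _
  unfold Gi Fi Hi
  rw [e3, e5]
  unfold rr at hR hA ⊢
  field_simp
  ring

lemma abs_factor_le (ψ : ℝ) : |Real.sin ψ ^ 2 - 2 * Real.cos ψ ^ 2| ≤ 2 := by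
  have h := Real.sin_sq_add_cos_sq ψ
  have h1 : 0 ≤ Real.sin ψ ^ 2 := sq_nonneg _
  have h2 : 0 ≤ Real.cos ψ ^ 2 := sq_nonneg _
  rw [abs_le]; constructor <;> nlinarith

lemma Fi_bound {t : ℝ} (ht : 0 ≤ t) (ψ : ℝ) : ‖Fi t ψ‖ ≤ 10 := by
  rcases eq_or_ne (Real.sin ψ) 0 with hs | hs
  · simp [Fi, hs]
  · have hsc := Real.sin_sq_add_cos_sq ψ
    have hs2 : 0 < Real.sin ψ ^ 2 := by positivity
    have hR1 : Real.sin ψ ^ 2 ≤ rr t ψ := by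
      unfold rr; nlinarith [mul_nonneg ht (sq_nonneg (Real.cos ψ))]
    have hRpos : 0 < rr t ψ := lt_of_lt_of_le hs2 hR1
    have ha : 0 < |Real.sin ψ| := abs_pos.mpr hs
    have ha1 : |Real.sin ψ| ≤ 1 := Real.abs_sin_le_one ψ
    have hs3 : (Real.sin ψ ^ 2) ^ ((3:ℝ)/2) = |Real.sin ψ| ^ 3 := by
      rw [show Real.sin ψ ^ 2 = |Real.sin ψ| ^ 2 by rw [sq_abs]]
      rw [← Real.rpow_natCast |Real.sin ψ| 2, ← Real.rpow_mul (abs_nonneg _)]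
      norm_num
    have h3 : |Real.sin ψ| ^ 3 ≤ (rr t ψ) ^ ((3:ℝ)/2) := by
      rw [← hs3]
      exact Real.rpow_le_rpow (sq_nonneg _) hR1 (by norm_num)
    have hpow : 0 < |Real.sin ψ| ^ 3 := by positivity
    have hinv : ((rr t ψ) ^ ((3:ℝ)/2))⁻¹ ≤ (|Real.sin ψ| ^ 3)⁻¹ :=
      inv_anti₀ hpow h3
    have hinv0 : 0 ≤ ((rr t ψ) ^ ((3:ℝ)/2))⁻¹ := by positivity
    have hB : 0 ≤ Real.sin ψ ^ 2 + 4 * Real.sin ψ ^ 4 := by positivity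
    have habs : ‖Fi t ψ‖ = |Real.sin ψ ^ 2 - 2 * Real.cos ψ ^ 2| *
        (Real.sin ψ ^ 2 + 4 * Real.sin ψ ^ 4) * ((rr t ψ) ^ ((3:ℝ)/2))⁻¹ * |Real.sin ψ| := by
      rw [Real.norm_eq_abs]
      unfold Fi
      rw [abs_mul, abs_mul, abs_mul, abs_of_nonneg hB, abs_of_nonneg hinv0]
    rw [habs]
    have step1 : |Real.sin ψ ^ 2 - 2 * Real.cos ψ ^ 2| *
        (Real.sin ψ ^ 2 + 4 * Real.sin ψ ^ 4) * ((rr t ψ) ^ ((3:ℝ)/2))⁻¹ * |Real.sin ψ| ≤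
        2 * (Real.sin ψ ^ 2 + 4 * Real.sin ψ ^ 4) * (|Real.sin ψ| ^ 3)⁻¹ * |Real.sin ψ| := by
      gcongr
      · exact abs_factor_le ψ
    refine le_trans step1 ?_
    have e2 : Real.sin ψ ^ 2 = |Real.sin ψ| ^ 2 := (sq_abs _).symm
    have e4 : Real.sin ψ ^ 4 = |Real.sin ψ| ^ 4 := by
      rw [show (4:ℕ) = 2*2 by norm_num, pow_mul, pow_mul, sq_abs]
    rw [e2, e4]
    generalize hga : |Real.sin ψ| = a at ha ha1 ⊢
    have heq : 2 * (a ^ 2 + 4 * a ^ 4) * (a ^ 3)⁻¹ * a = 2 + 8 * a ^ 2 := by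
      field_simp
      ring
    rw [heq]
    nlinarith

lemma Gi_bound {m t : ℝ} (hm : 0 < m) (ψ : ℝ) (hr : m ≤ rr t ψ) :
    ‖Gi t ψ‖ ≤ 15 * (m ^ ((5:ℝ)/2))⁻¹ := by
  have hsc := Real.sin_sq_add_cos_sq ψ
  have hRpos : 0 < rr t ψ := lt_of_lt_of_le hm hr
  have h5 : m ^ ((5:ℝ)/2) ≤ (rr t ψ) ^ ((5:ℝ)/2) := Real.rpow_le_rpow hm.le hr (by norm_num)
  have hmp : 0 < m ^ ((5:ℝ)/2) := Real.rpow_pos_of_pos hm _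
  have hinv : ((rr t ψ) ^ ((5:ℝ)/2))⁻¹ ≤ (m ^ ((5:ℝ)/2))⁻¹ := inv_anti₀ hmp h5
  have hinv0 : 0 ≤ ((rr t ψ) ^ ((5:ℝ)/2))⁻¹ := by positivity
  have hA : |(Real.sin ψ ^ 2 - 2 * Real.cos ψ ^ 2) * (Real.sin ψ ^ 2 + 4 * Real.sin ψ ^ 4)| ≤ 10 := by
    rw [abs_mul]
    have h1 := abs_factor_le ψ
    have h2 : |Real.sin ψ ^ 2 + 4 * Real.sin ψ ^ 4| ≤ 5 := by
      rw [abs_le]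
      have hs1 : Real.sin ψ ^ 2 ≤ 1 := by nlinarith [sq_nonneg (Real.cos ψ)]
      constructor <;> nlinarith [sq_nonneg (Real.sin ψ), sq_nonneg (Real.sin ψ ^ 2)]
    calc |Real.sin ψ ^ 2 - 2 * Real.cos ψ ^ 2| * |Real.sin ψ ^ 2 + 4 * Real.sin ψ ^ 4|
        ≤ 2 * 5 := mul_le_mul h1 h2 (abs_nonneg _) (by norm_num)
      _ = 10 := by norm_num
  have hc : Real.cos ψ ^ 2 ≤ 1 := by nlinarith [sq_nonneg (Real.sin ψ)]
  have hs1 : |Real.sin ψ| ≤ 1 := Real.abs_sin_le_one ψ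
  have habs : ‖Gi t ψ‖ = (3/2) * |(Real.sin ψ ^ 2 - 2 * Real.cos ψ ^ 2) *
      (Real.sin ψ ^ 2 + 4 * Real.sin ψ ^ 4)| * Real.cos ψ ^ 2 *
      ((rr t ψ) ^ ((5:ℝ)/2))⁻¹ * |Real.sin ψ| := by
    rw [Real.norm_eq_abs]
    unfold Gi
    rw [abs_neg, abs_mul, abs_mul, abs_mul, abs_mul]
    rw [abs_of_nonneg (show (0:ℝ) ≤ 3/2 by norm_num), abs_of_nonneg (sq_nonneg (Real.cos ψ)),
      abs_of_nonneg hinv0]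
  rw [habs]
  have p1 : |(Real.sin ψ ^ 2 - 2 * Real.cos ψ ^ 2) * (Real.sin ψ ^ 2 + 4 * Real.sin ψ ^ 4)| *
      Real.cos ψ ^ 2 ≤ 10 := by
    nlinarith [mul_le_mul_of_nonneg_left hc (abs_nonneg ((Real.sin ψ ^ 2 - 2 * Real.cos ψ ^ 2) *
      (Real.sin ψ ^ 2 + 4 * Real.sin ψ ^ 4))), abs_nonneg ((Real.sin ψ ^ 2 - 2 * Real.cos ψ ^ 2) *
      (Real.sin ψ ^ 2 + 4 * Real.sin ψ ^ 4)), sq_nonneg (Real.cos ψ)]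
  have p2 : ((rr t ψ) ^ ((5:ℝ)/2))⁻¹ * |Real.sin ψ| ≤ (m ^ ((5:ℝ)/2))⁻¹ := by
    nlinarith [mul_le_mul_of_nonneg_left hs1 hinv0]
  have p0 : 0 ≤ ((rr t ψ) ^ ((5:ℝ)/2))⁻¹ * |Real.sin ψ| := mul_nonneg hinv0 (abs_nonneg _)
  have p3 := mul_le_mul p1 p2 p0 (by norm_num : (0:ℝ) ≤ 10)
  nlinarith [p3]

lemma hasDerivAt_pfun {t₀ : ℝ} (ht₀ : 0 < t₀) :
    HasDerivAt pfun (∫ ψ in (0:ℝ)..Real.pi, Gi t₀ ψ) t₀ := by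
  have hmin : 0 < min 1 (t₀/2) := by positivity
  have key := intervalIntegral.hasDerivAt_integral_of_dominated_loc_of_deriv_le
    (F := Fi) (F' := Gi) (a := 0) (b := Real.pi) (μ := volume)
    (bound := fun _ => 15 * ((min 1 (t₀/2)) ^ ((5:ℝ)/2))⁻¹) (x₀ := t₀)
    (s := Metric.ball t₀ (t₀/2)) (Metric.ball_mem_nhds t₀ (half_pos ht₀))
    ?_ ?_ ?_ ?_ ?_ ?_
  · exact key.2
  · filter_upwards [eventually_gt_nhds (show t₀/2 < t₀ by linarith)] with t ht
    exact ((continuous_Fi (lt_trans (half_pos ht₀) ht)).aestronglyMeasurable).restrict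
  · exact (continuous_Fi ht₀).intervalIntegrable _ _
  · exact ((continuous_Gi ht₀).aestronglyMeasurable).restrict
  · apply ae_of_all
    intro ψ _ t htball
    have ht2 : t₀/2 < t := by
      rw [Metric.mem_ball, Real.dist_eq, abs_sub_lt_iff] at htball
      linarith [htball.2]
    have htpos : 0 < t := lt_trans (half_pos ht₀) ht2
    apply Gi_bound hmin
    calc min 1 (t₀/2) ≤ min 1 t := by
          apply le_min (min_le_left _ _)
          calc min 1 (t₀/2) ≤ t₀/2 := min_le_right _ _
            _ ≤ t := ht2.le
      _ ≤ rr t ψ := rr_ge_min htpos ψ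
  · exact intervalIntegrable_const
  · apply ae_of_all
    intro ψ _ t htball
    have ht2 : t₀/2 < t := by
      rw [Metric.mem_ball, Real.dist_eq, abs_sub_lt_iff] at htball
      linarith [htball.2]
    exact hasDerivAt_Fi (lt_trans (half_pos ht₀) ht2) ψ

lemma key_integral {t : ℝ} (ht : 0 < t) :
    (2 + t) * (∫ ψ in (0:ℝ)..Real.pi, Gi t ψ) + (3/2) * pfun t =
      ∫ ψ in (0:ℝ)..Real.pi, Hi t ψ := by
  rw [pfun_eq]
  rw [← intervalIntegral.integral_const_mul, ← intervalIntegral.integral_const_mul,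
    ← intervalIntegral.integral_add
      (((continuous_Gi ht).intervalIntegrable _ _).const_mul _)
      (((continuous_Fi ht).intervalIntegrable _ _).const_mul _)]
  apply intervalIntegral.integral_congr
  intro ψ _
  exact key_identity ht ψ

lemma Hi_nonneg {t : ℝ} (ht : 0 < t) {ψ : ℝ} (hψ : ψ ∈ Set.Icc 0 Real.pi) : 0 ≤ Hi t ψ := by
  have hs : 0 ≤ Real.sin ψ := Real.sin_nonneg_of_nonneg_of_le_pi hψ.1 hψ.2
  have hinv : 0 ≤ ((rr t ψ) ^ ((5:ℝ)/2))⁻¹ :=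
    inv_nonneg.mpr (Real.rpow_nonneg (rr_pos ht ψ).le _)
  unfold Hi
  apply mul_nonneg (mul_nonneg (mul_nonneg (mul_nonneg (by norm_num)
    (sq_nonneg (Real.sin ψ ^ 2 - 2 * Real.cos ψ ^ 2)))
    (by positivity : (0:ℝ) ≤ Real.sin ψ ^ 2 + 4 * Real.sin ψ ^ 4)) hinv) hs

lemma Hi_pos {t : ℝ} (ht : 0 < t) {ψ : ℝ} (hψ : ψ ∈ Set.Ioo (Real.pi/3) (2*Real.pi/3)) :
    0 < Hi t ψ := by
  have hpi := Real.pi_pos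
  have hψ1 : 0 < ψ := lt_trans (by linarith) hψ.1
  have hψ2 : ψ < Real.pi := lt_trans hψ.2 (by linarith)
  have hs : 0 < Real.sin ψ := Real.sin_pos_of_pos_of_lt_pi hψ1 hψ2
  have hc1 : Real.cos ψ < 1/2 := by
    have := Real.cos_lt_cos_of_nonneg_of_le_pi (by positivity) hψ2.le hψ.1
    rwa [Real.cos_pi_div_three] at this
  have hc2 : -(1/2) < Real.cos ψ := by
    have h2 := Real.cos_lt_cos_of_nonneg_of_le_pi hψ1.le (by linarith) hψ.2
    have : Real.cos (2*Real.pi/3) = -(1/2) := by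
      rw [show 2*Real.pi/3 = Real.pi - Real.pi/3 by ring, Real.cos_pi_sub, Real.cos_pi_div_three]
    linarith [this ▸ h2]
  have hcsq : Real.cos ψ ^ 2 < 1/4 := by nlinarith
  have hsc := Real.sin_sq_add_cos_sq ψ
  have hfac : 0 < Real.sin ψ ^ 2 - 2 * Real.cos ψ ^ 2 := by nlinarith
  have hinv : 0 < ((rr t ψ) ^ ((5:ℝ)/2))⁻¹ := by
    have := rr_pos ht ψ
    positivity
  have hsq : 0 < (Real.sin ψ ^ 2 - 2 * Real.cos ψ ^ 2) ^ 2 := pow_pos hfac 2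
  have hB : 0 < Real.sin ψ ^ 2 + 4 * Real.sin ψ ^ 4 := by
    nlinarith [pow_pos hs 2, pow_pos hs 4]
  unfold Hi
  apply mul_pos (mul_pos (mul_pos (mul_pos (by norm_num) hsq) hB) hinv) hs

lemma integral_Hi_pos {t : ℝ} (ht : 0 < t) : 0 < ∫ ψ in (0:ℝ)..Real.pi, Hi t ψ := by
  have hpi := Real.pi_pos
  have hint : ∀ a b : ℝ, IntervalIntegrable (Hi t) volume a b :=
    fun a b => (continuous_Hi ht).intervalIntegrable a b
  have split1 : (∫ ψ in (0:ℝ)..(Real.pi/3), Hi t ψ) + (∫ ψ in (Real.pi/3)..Real.pi, Hi t ψ) =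
      ∫ ψ in (0:ℝ)..Real.pi, Hi t ψ :=
    intervalIntegral.integral_add_adjacent_intervals (hint _ _) (hint _ _)
  have split2 : (∫ ψ in (Real.pi/3)..(2*Real.pi/3), Hi t ψ) +
      (∫ ψ in (2*Real.pi/3)..Real.pi, Hi t ψ) = ∫ ψ in (Real.pi/3)..Real.pi, Hi t ψ :=
    intervalIntegral.integral_add_adjacent_intervals (hint _ _) (hint _ _)
  have h1 : 0 ≤ ∫ ψ in (0:ℝ)..(Real.pi/3), Hi t ψ := by
    apply intervalIntegral.integral_nonneg (by linarith)
    intro u hu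
    exact Hi_nonneg ht ⟨hu.1, by linarith [hu.2]⟩
  have h3 : 0 ≤ ∫ ψ in (2*Real.pi/3)..Real.pi, Hi t ψ := by
    apply intervalIntegral.integral_nonneg (by linarith)
    intro u hu
    exact Hi_nonneg ht ⟨by linarith [hu.1], hu.2⟩
  have h2 : 0 < ∫ ψ in (Real.pi/3)..(2*Real.pi/3), Hi t ψ := by
    apply intervalIntegral.intervalIntegral_pos_of_pos_on (hint _ _)
    · intro x hx; exact Hi_pos ht hx
    · linarith
  linarith

lemma pfun_zero : pfun 0 = 0 := by
  rw [pfun_eq]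
  have hpi := Real.pi_pos
  have hcongr : (∫ ψ in (0:ℝ)..Real.pi, Fi 0 ψ) =
      ∫ ψ in (0:ℝ)..Real.pi, (Real.sin ψ ^ 2 - 2 * Real.cos ψ ^ 2) * (1 + 4 * Real.sin ψ ^ 2) := by
    apply intervalIntegral.integral_congr_ae
    have hne : ∀ᵐ ψ : ℝ, ψ ≠ Real.pi := by
      refine ae_iff.2 ?_
      simp only [not_not]
      simpa using measure_singleton Real.pi
    filter_upwards [hne] with ψ hψne hψ
    rw [Set.uIoc_of_le hpi.le] at hψ
    have hψ1 : 0 < ψ := hψ.1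
    have hψ2 : ψ < Real.pi := lt_of_le_of_ne hψ.2 hψne
    have hs : 0 < Real.sin ψ := Real.sin_pos_of_pos_of_lt_pi hψ1 hψ2
    unfold Fi rr
    have hb : Real.sin ψ ^ 2 + 0 * Real.cos ψ ^ 2 = Real.sin ψ ^ 2 := by ring
    rw [hb]
    have hs3 : (Real.sin ψ ^ 2) ^ ((3:ℝ)/2) = Real.sin ψ ^ 3 := by
      rw [← Real.rpow_natCast (Real.sin ψ) 2, ← Real.rpow_mul hs.le,
        show ((2:ℕ):ℝ) * ((3:ℝ)/2) = ((3:ℕ):ℝ) by norm_num, Real.rpow_natCast]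
    rw [hs3]
    field_simp
  rw [hcongr]
  set φ : ℝ → ℝ := fun x => 5*x - (19/2)*(x + Real.sin x * Real.cos x) +
    (3/2)*(3*x + 3*(Real.sin x * Real.cos x) + 2*(Real.sin x * Real.cos x ^ 3)) with hφ
  have hderiv : ∀ x ∈ Set.uIcc (0:ℝ) Real.pi, HasDerivAt φ
      ((Real.sin x ^ 2 - 2 * Real.cos x ^ 2) * (1 + 4 * Real.sin x ^ 2)) x := by
    intro x _
    have hsc : HasDerivAt (fun x => Real.sin x * Real.cos x)
        (Real.cos x * Real.cos x + Real.sin x * -Real.sin x) x :=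
      (Real.hasDerivAt_sin x).mul (Real.hasDerivAt_cos x)
    have hc3 : HasDerivAt (fun x => Real.cos x ^ 3)
        (3 * Real.cos x ^ 2 * -Real.sin x) x := by
      refine ((Real.hasDerivAt_cos x).pow 3).congr_deriv ?_
      norm_num
    have hsc3 : HasDerivAt (fun x => Real.sin x * Real.cos x ^ 3)
        (Real.cos x * Real.cos x ^ 3 + Real.sin x * (3 * Real.cos x ^ 2 * -Real.sin x)) x :=
      (Real.hasDerivAt_sin x).mul hc3
    have hid : HasDerivAt (fun x : ℝ => x) 1 x := hasDerivAt_id x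
    have h := (((hid.const_mul 5).sub ((hid.add hsc).const_mul (19/2))).add
      ((((hid.const_mul 3).add (hsc.const_mul 3)).add (hsc3.const_mul 2)).const_mul (3/2)))
    refine h.congr_deriv ?_
    symm
    have hpyth := Real.sin_sq_add_cos_sq x
    linear_combination (4 * Real.sin x ^ 2 - 3 * Real.cos x ^ 2) * hpyth
  have hint : IntervalIntegrable
      (fun x => (Real.sin x ^ 2 - 2 * Real.cos x ^ 2) * (1 + 4 * Real.sin x ^ 2))
      volume 0 Real.pi := by
    apply Continuous.intervalIntegrable; fun_prop
  rw [intervalIntegral.integral_eq_sub_of_hasDerivAt hderiv hint]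
  simp [hφ, Real.sin_pi, Real.sin_zero]
  ring

lemma pfun_continuousWithinAt_zero : ContinuousWithinAt pfun (Set.Ici 0) 0 := by
  have hpi := Real.pi_pos
  unfold ContinuousWithinAt
  have : pfun = fun t => ∫ ψ in (0:ℝ)..Real.pi, Fi t ψ := rfl
  rw [this]
  apply intervalIntegral.tendsto_integral_filter_of_dominated_convergence
    (bound := fun _ => 10)
  · exact Filter.Eventually.of_forall
      (fun t => ((measurable_Fi t).aestronglyMeasurable).restrict)
  · filter_upwards [self_mem_nhdsWithin] with t ht
    exact ae_of_all _ (fun ψ _ => Fi_bound ht ψ)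
  · exact intervalIntegrable_const
  · apply ae_of_all
    intro ψ hψ
    rcases eq_or_ne (Real.sin ψ) 0 with hs | hs
    · have : (fun t => Fi t ψ) = fun _ => Fi 0 ψ := by
        funext t; simp [Fi, hs]
      rw [this]
      exact tendsto_const_nhds
    · have hs2 : 0 < Real.sin ψ ^ 2 := by positivity
      have hcont : ContinuousAt (fun t => Fi t ψ) 0 := by
        have h1 : ContinuousAt (fun t => rr t ψ) 0 := by
          unfold rr; fun_prop
        have hbase : rr 0 ψ = Real.sin ψ ^ 2 := by unfold rr; ring
        have h2 : ContinuousAt (fun t => (rr t ψ) ^ ((3:ℝ)/2)) 0 :=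
          h1.rpow_const (Or.inr (by norm_num))
        have h3 : ContinuousAt (fun t => ((rr t ψ) ^ ((3:ℝ)/2))⁻¹) 0 := by
          apply h2.inv₀
          rw [hbase]
          exact (Real.rpow_pos_of_pos hs2 _).ne'
        exact (((continuousAt_const.mul continuousAt_const).mul h3).mul continuousAt_const).congr
          (by filter_upwards with t; rfl) |>.congr (by filter_upwards with t; rfl)
      exact hcont.tendsto.mono_left nhdsWithin_le_nhds

end PfunAux

open PfunAux in
/-- `p(t) > 0` for every `t > 0`. -/
theorem pfun_pos (t : ℝ) (ht : 0 < t) : 0 < pfun t := by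
  set q : ℝ → ℝ := fun x => (2 + x) ^ ((3:ℝ)/2) * pfun x with hq
  have hqderiv : ∀ x : ℝ, 0 < x → HasDerivAt q
      ((3/2) * (2 + x) ^ ((1:ℝ)/2) * pfun x +
        (2 + x) ^ ((3:ℝ)/2) * ∫ ψ in (0:ℝ)..Real.pi, Gi x ψ) x := by
    intro x hx
    have h2x : (0:ℝ) < 2 + x := by linarith
    have h0 : HasDerivAt (fun y : ℝ => 2 + y) 1 x := (hasDerivAt_id x).const_add 2
    have hr : HasDerivAt (fun y : ℝ => y ^ ((3:ℝ)/2))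
        ((3:ℝ)/2 * (2 + x) ^ ((3:ℝ)/2 - 1)) (2 + x) :=
      Real.hasDerivAt_rpow_const (Or.inl h2x.ne')
    have h1 : HasDerivAt (fun y : ℝ => (2 + y) ^ ((3:ℝ)/2))
        ((3:ℝ)/2 * (2 + x) ^ ((3:ℝ)/2 - 1)) x := by
      have := hr.comp x h0; rw [mul_one] at this; exact this
    have h2 := h1.mul (hasDerivAt_pfun hx)
    refine h2.congr_deriv ?_
    norm_num
  have hIpos : ∀ x : ℝ, 0 < x → 0 < (3/2) * (2 + x) ^ ((1:ℝ)/2) * pfun x +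
      (2 + x) ^ ((3:ℝ)/2) * ∫ ψ in (0:ℝ)..Real.pi, Gi x ψ := by
    intro x hx
    have h2x : (0:ℝ) < 2 + x := by linarith
    have hkey := key_integral hx
    have hIx := integral_Hi_pos hx
    have hhalf : 0 < (2 + x) ^ ((1:ℝ)/2) := Real.rpow_pos_of_pos h2x _
    have hsplit : (2 + x) ^ ((3:ℝ)/2) = (2 + x) ^ ((1:ℝ)/2) * (2 + x) := by
      rw [show (3:ℝ)/2 = 1/2 + 1 by norm_num, Real.rpow_add h2x, Real.rpow_one]
    rw [hsplit]
    calc (0:ℝ) < (2 + x) ^ ((1:ℝ)/2) *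
          ((2 + x) * (∫ ψ in (0:ℝ)..Real.pi, Gi x ψ) + (3/2) * pfun x) := by
          rw [hkey]; exact mul_pos hhalf hIx
      _ = (3/2) * (2 + x) ^ ((1:ℝ)/2) * pfun x +
          (2 + x) ^ ((1:ℝ)/2) * (2 + x) * ∫ ψ in (0:ℝ)..Real.pi, Gi x ψ := by ring
  have hcont : ContinuousOn q (Set.Icc 0 t) := by
    intro x hx
    rcases eq_or_lt_of_le hx.1 with hx0 | hx0
    · subst hx0
      apply ContinuousWithinAt.mul
      · apply ContinuousWithinAt.rpow_const
        · exact (continuous_const.add continuous_id).continuousWithinAt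
        · left; norm_num
      · exact (pfun_continuousWithinAt_zero.mono (fun y hy => hy.1))
    · exact ((hqderiv x hx0).continuousAt).continuousWithinAt
  have hmono : StrictMonoOn q (Set.Icc 0 t) := by
    apply strictMonoOn_of_deriv_pos (convex_Icc 0 t) hcont
    intro x hx
    rw [interior_Icc] at hx
    rw [(hqderiv x hx.1).deriv]
    exact hIpos x hx.1
  have h0mem : (0:ℝ) ∈ Set.Icc 0 t := ⟨le_refl _, ht.le⟩
  have htmem : t ∈ Set.Icc (0:ℝ) t := ⟨ht.le, le_refl _⟩
  have hlt := hmono h0mem htmem ht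
  have hq0 : q 0 = 0 := by
    simp [hq, pfun_zero]
  rw [hq0] at hlt
  have hpow : 0 < (2 + t) ^ ((3:ℝ)/2) := Real.rpow_pos_of_pos (by linarith) _
  rcases mul_pos_iff.mp hlt with ⟨_, h⟩ | ⟨h, _⟩
  · exact h
  · linarith

end
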